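/- Let $K$ be a number field, $r \geq 1$, and let $b, d, f \in K$ and $a_i, c_i, e_i \in K$ ($1 \leq i \leq r$) all be nonzero. Then there exist a finite extension field $L$ of $K$ and a finite set $S$ of finite places of $L$ such that $b, d, f$ and all $a_i, c_i, e_i$ are $S$-units of $L$, and the set $E$ of triples $(\alpha, \beta, \gamma)$ of $S$-units of $L$ with the property that for every finite place $v$ of $L$ outside $S$ and every $i \in \{1,\dots,r\}$, at least one of the three elements $c_i(\alpha - b) - a_i(\beta - d)$, $e_i(\beta - d) - c_i(\gamma - f)$, $e_i(\alpha - b) - a_i(\gamma - f)$ has $v$-adic valuation $0$ (is a $v$-adic unit), is Zariski dense in affine 3-space: the only polynomial in three variables over $L$ vanishing at every element of $E$ is the zero polynomial. -/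

import Mathlib

open NumberField IsDedekindDomain

/-- A witness of potential density for the complement in `ℙ³` of the four coordinate hyperplanes
together with `r` concurrent lines through `p = [b : d : f : 1]` with directions
`[aᵢ : cᵢ : eᵢ : 0]`: a finite extension `L` of `K` and a finite set `S` of finite places of `L`
making `b, d, f, aᵢ, cᵢ, eᵢ` all `S`-units, such that the set `E` of triples of `S`-units
`(α, β, γ)` for which, at every finite place `v ∉ S` and every `i`, at least one of the three
minors `cᵢ(α-b) - aᵢ(β-d)`, `eᵢ(β-d) - cᵢ(γ-f)`, `eᵢ(α-b) - aᵢ(γ-f)` is a `v`-adic unit, is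
Zariski dense in affine 3-space over `L`. -/
structure ConcurrentLinesDensityWitness
    (K : Type*) [Field K] [NumberField K]
    (r : ℕ) (b d f : K) (a c e : Fin r → K) where
  /-- the finite extension field -/
  L : Type
  [fieldL : Field L]
  [numberFieldL : NumberField L]
  [algebraKL : Algebra K L]
  finiteDim : FiniteDimensional K L
  /-- the finite set of finite places of `L` -/
  S : Finset (HeightOneSpectrum (𝓞 L))
  unit_b : ∀ v : HeightOneSpectrum (𝓞 L), v ∉ S → v.valuation L (algebraMap K L b) = 1
  unit_d : ∀ v : HeightOneSpectrum (𝓞 L), v ∉ S → v.valuation L (algebraMap K L d) = 1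
  unit_f : ∀ v : HeightOneSpectrum (𝓞 L), v ∉ S → v.valuation L (algebraMap K L f) = 1
  unit_a : ∀ i, ∀ v : HeightOneSpectrum (𝓞 L), v ∉ S → v.valuation L (algebraMap K L (a i)) = 1
  unit_c : ∀ i, ∀ v : HeightOneSpectrum (𝓞 L), v ∉ S → v.valuation L (algebraMap K L (c i)) = 1
  unit_e : ∀ i, ∀ v : HeightOneSpectrum (𝓞 L), v ∉ S → v.valuation L (algebraMap K L (e i)) = 1
  /-- Zariski density of the set `E`: any polynomial in three variables over `L` vanishing on
  every triple of `S`-units satisfying the minor condition at all `v ∉ S` is zero. -/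
  dense : ∀ p : MvPolynomial (Fin 3) L,
    (∀ x : Fin 3 → L,
      (∀ j, ∀ v : HeightOneSpectrum (𝓞 L), v ∉ S → v.valuation L (x j) = 1) →
      (∀ v : HeightOneSpectrum (𝓞 L), v ∉ S → ∀ i : Fin r,
        v.valuation L (algebraMap K L (c i) * (x 0 - algebraMap K L b) -
            algebraMap K L (a i) * (x 1 - algebraMap K L d)) = 1 ∨
        v.valuation L (algebraMap K L (e i) * (x 1 - algebraMap K L d) -
            algebraMap K L (c i) * (x 2 - algebraMap K L f)) = 1 ∨
        v.valuation L (algebraMap K L (e i) * (x 0 - algebraMap K L b) -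
            algebraMap K L (a i) * (x 2 - algebraMap K L f)) = 1) →
      MvPolynomial.eval x p = 0) →
    p = 0

section AuxiliaryLemmas

variable {F : Type*} [Field F] [NumberField F]

/-- If `gcd m n = 1` then `2^m - 1` and `2^n - 1` are coprime natural numbers. -/
theorem ConcurrentLinesAux.nat_gcd {m n : ℕ} (h : Nat.gcd m n = 1) :
    Nat.gcd (2 ^ m - 1) (2 ^ n - 1) = 1 := by
  set d := Nat.gcd (2 ^ m - 1) (2 ^ n - 1) with hd
  have key : ∀ j : ℕ, d ∣ 2 ^ j - 1 → (2 : ZMod d) ^ j = 1 := by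
    intro j hj
    have h2j : (1 : ℕ) ≤ 2 ^ j := Nat.one_le_two_pow
    have h0 : ((2 ^ j - 1 : ℕ) : ZMod d) = 0 := (ZMod.natCast_eq_zero_iff _ _).mpr hj
    rw [Nat.cast_sub h2j] at h0
    push_cast at h0
    have := sub_eq_zero.mp h0
    simpa using this
  have h1 : (2 : ZMod d) ^ m = 1 := key m (Nat.gcd_dvd_left _ _)
  have h2 : (2 : ZMod d) ^ n = 1 := key n (Nat.gcd_dvd_right _ _)
  have ho : orderOf (2 : ZMod d) ∣ Nat.gcd m n :=
    Nat.dvd_gcd (orderOf_dvd_of_pow_eq_one h1) (orderOf_dvd_of_pow_eq_one h2)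
  rw [h] at ho
  have h21 : (2 : ZMod d) = 1 := orderOf_eq_one_iff.mp (Nat.dvd_one.mp ho)
  have hfin : ((1 : ℕ) : ZMod d) = 0 := by
    have h2c : ((2 : ℕ) : ZMod d) = ((1 : ℕ) : ZMod d) := by push_cast; exact h21
    have h' := sub_eq_zero.mpr h2c
    push_cast at h' ⊢
    linear_combination h'
  exact Nat.dvd_one.mp ((ZMod.natCast_eq_zero_iff _ _).mp hfin)

/-- For a nonzero ring-of-integers element, only finitely many places see it non-unit. -/
theorem ConcurrentLinesAux.finite_int (x : 𝓞 F) (hx : x ≠ 0) :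
    {v : HeightOneSpectrum (𝓞 F) | v.valuation F ((algebraMap (𝓞 F) F) x) ≠ 1}.Finite := by
  refine (Ideal.finite_factors (I := Ideal.span {x}) (by simpa using hx)).subset ?_
  intro v hv
  have hle := v.valuation_le_one (K := F) x
  exact (v.valuation_lt_one_iff_dvd x).mp (lt_of_le_of_ne hle hv)

/-- For a nonzero element of a number field, only finitely many places see it non-unit. -/
theorem ConcurrentLinesAux.finite_places (x : F) (hx : x ≠ 0) :
    {v : HeightOneSpectrum (𝓞 F) | v.valuation F x ≠ 1}.Finite := by
  obtain ⟨r, s, hs, rfl⟩ := IsFractionRing.div_surjective (A := 𝓞 F) x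
  have hr : r ≠ 0 := by rintro rfl; simp at hx
  have hs0 : s ≠ 0 := nonZeroDivisors.ne_zero hs
  refine ((ConcurrentLinesAux.finite_int r hr).union
    (ConcurrentLinesAux.finite_int s hs0)).subset ?_
  intro v hv
  simp only [Set.mem_setOf_eq, Set.mem_union]
  by_contra hcon
  push_neg at hcon
  exact hv (by rw [map_div₀, hcon.1, hcon.2, div_one])

/-- An auxiliary "order": `φ` of the odd part of the absolute norm of `v`. -/
noncomputable def ConcurrentLinesAux.ord2 (v : HeightOneSpectrum (𝓞 F)) : ℕ :=
  Nat.totient (ordCompl[2] (Ideal.absNorm v.asIdeal))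

theorem ConcurrentLinesAux.ord2_pos (v : HeightOneSpectrum (𝓞 F)) :
    0 < ConcurrentLinesAux.ord2 v := by
  have hn : Ideal.absNorm v.asIdeal ≠ 0 := by
    rw [Ne, Ideal.absNorm_eq_zero_iff]; exact v.ne_bot
  exact Nat.totient_pos.mpr (Nat.ordCompl_pos 2 hn)

/-- If `2` is a `v`-unit and `ord2 v ∣ k` then `v` divides `2^k - 1`. -/
theorem ConcurrentLinesAux.ord2_spec (v : HeightOneSpectrum (𝓞 F))
    (hv2 : v.valuation F (2 : F) = 1) (k : ℕ) (hk : ConcurrentLinesAux.ord2 v ∣ k) :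
    v.valuation F ((2 : F) ^ k - 1) < 1 := by
  set n := Ideal.absNorm v.asIdeal with hn'
  have hn : n ≠ 0 := by rw [hn', Ne, Ideal.absNorm_eq_zero_iff]; exact v.ne_bot
  set q := ordCompl[2] n with hq'
  have h2q : ¬ (2 ∣ q) := Nat.not_dvd_ordCompl Nat.prime_two hn
  have h2v : (2 : 𝓞 F) ∉ v.asIdeal := by
    intro hmem
    have hlt : v.valuation F ((algebraMap (𝓞 F) F) (2 : 𝓞 F)) < 1 :=
      (v.valuation_lt_one_iff_dvd _).mpr (Ideal.dvd_span_singleton.mpr hmem)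
    rw [map_ofNat, hv2] at hlt
    exact lt_irrefl _ hlt
  have hqmem : ((q : ℕ) : 𝓞 F) ∈ v.asIdeal := by
    have hnmem : ((n : ℕ) : 𝓞 F) ∈ v.asIdeal := Ideal.absNorm_mem v.asIdeal
    have hsplit : ((2 ^ (n.factorization 2) * q : ℕ) : 𝓞 F) ∈ v.asIdeal := by
      rwa [Nat.ordProj_mul_ordCompl_eq_self n 2]
    push_cast at hsplit
    rcases (v.isPrime.mem_or_mem hsplit) with h | h
    · exact absurd (v.isPrime.mem_of_pow_mem _ h) (by exact_mod_cast h2v)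
    · exact h
  have hcop : Nat.Coprime 2 q := (Nat.Prime.coprime_iff_not_dvd Nat.prime_two).mpr h2q
  obtain ⟨t, rfl⟩ := hk
  have heuler : (2 : ℕ) ^ (ConcurrentLinesAux.ord2 v * t) ≡ 1 [MOD q] := by
    have h1 : (2 : ℕ) ^ Nat.totient q ≡ 1 [MOD q] := Nat.ModEq.pow_totient hcop
    calc (2 : ℕ) ^ (ConcurrentLinesAux.ord2 v * t) = ((2 : ℕ) ^ Nat.totient q) ^ t := by
          rw [pow_mul]; rfl
      _ ≡ 1 ^ t [MOD q] := Nat.ModEq.pow t h1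
      _ = 1 := one_pow t
  have hdvd : q ∣ 2 ^ (ConcurrentLinesAux.ord2 v * t) - 1 :=
    (Nat.modEq_iff_dvd' Nat.one_le_two_pow).mp heuler.symm
  have hmem : ((2 ^ (ConcurrentLinesAux.ord2 v * t) - 1 : ℕ) : 𝓞 F) ∈ v.asIdeal := by
    obtain ⟨cc, hcc⟩ := hdvd
    rw [hcc]; push_cast
    exact Ideal.mul_mem_right _ _ hqmem
  have hlt : v.valuation F
      ((algebraMap (𝓞 F) F) ((2 ^ (ConcurrentLinesAux.ord2 v * t) - 1 : ℕ) : 𝓞 F)) < 1 :=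
    (v.valuation_lt_one_iff_dvd _).mpr (Ideal.dvd_span_singleton.mpr hmem)
  have hcast : ((algebraMap (𝓞 F) F) ((2 ^ (ConcurrentLinesAux.ord2 v * t) - 1 : ℕ) : 𝓞 F))
      = (2 : F) ^ (ConcurrentLinesAux.ord2 v * t) - 1 := by
    rw [Nat.cast_sub Nat.one_le_two_pow, Nat.cast_pow, Nat.cast_ofNat, Nat.cast_one,
      map_sub, map_pow, map_ofNat, map_one]
  rwa [hcast] at hlt

theorem ConcurrentLinesAux.val2pow_le (v : HeightOneSpectrum (𝓞 F)) (j : ℕ) :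
    v.valuation F ((2 : F) ^ j - 1) ≤ 1 := by
  have heq : (2 : F) ^ j - 1 = algebraMap (𝓞 F) F ((2 : 𝓞 F) ^ j - 1) := by
    rw [map_sub, map_pow, map_ofNat, map_one]
  rw [heq]; exact v.valuation_le_one _

/-- No finite place can divide both `2^m - 1` and `2^n - 1` when `gcd m n = 1`. -/
theorem ConcurrentLinesAux.no_common_divisor {m n : ℕ} (h : Nat.gcd m n = 1)
    (v : HeightOneSpectrum (𝓞 F))
    (hm : v.valuation F ((2 : F) ^ m - 1) < 1) (hn : v.valuation F ((2 : F) ^ n - 1) < 1) :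
    False := by
  have hg := ConcurrentLinesAux.nat_gcd h
  have hz := Nat.gcd_eq_gcd_ab (2 ^ m - 1) (2 ^ n - 1)
  rw [hg] at hz
  set A := Nat.gcdA (2 ^ m - 1) (2 ^ n - 1) with hA
  set B := Nat.gcdB (2 ^ m - 1) (2 ^ n - 1) with hB
  have e : ∀ j : ℕ, ((2 ^ j - 1 : ℕ) : ℤ) = 2 ^ j - 1 := by
    intro j; rw [Nat.cast_sub Nat.one_le_two_pow]; push_cast; ring
  rw [e m, e n] at hz
  have hK : (1 : F) = ((2 : F) ^ m - 1) * (A : F) + ((2 : F) ^ n - 1) * (B : F) := by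
    have hcast := congrArg (fun z : ℤ => (z : F)) hz
    push_cast at hcast
    linear_combination hcast
  have hAle : v.valuation F ((A : F)) ≤ 1 := by
    rw [show ((A : F)) = algebraMap (𝓞 F) F ((A : 𝓞 F)) by rw [map_intCast]]
    exact v.valuation_le_one _
  have hBle : v.valuation F ((B : F)) ≤ 1 := by
    rw [show ((B : F)) = algebraMap (𝓞 F) F ((B : 𝓞 F)) by rw [map_intCast]]
    exact v.valuation_le_one _
  have h1 : v.valuation F ((2 : F) ^ m - 1) * v.valuation F ((A : F)) < 1 :=
    lt_of_le_of_lt (mul_le_of_le_one_right' hAle) hm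
  have h2 : v.valuation F ((2 : F) ^ n - 1) * v.valuation F ((B : F)) < 1 :=
    lt_of_le_of_lt (mul_le_of_le_one_right' hBle) hn
  have hcontr : (1 : WithZero (Multiplicative ℤ)) < 1 := by
    calc (1 : WithZero (Multiplicative ℤ)) = v.valuation F (1 : F) := (map_one _).symm
      _ = v.valuation F (((2 : F) ^ m - 1) * (A : F) + ((2 : F) ^ n - 1) * (B : F)) := by
          rw [← hK]
      _ ≤ max (v.valuation F (((2 : F) ^ m - 1) * (A : F)))
            (v.valuation F (((2 : F) ^ n - 1) * (B : F))) := (v.valuation F).map_add _ _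
      _ < 1 := by rw [map_mul, map_mul]; exact max_lt h1 h2
  exact lt_irrefl _ hcontr

/-- The key local computation: at a place where all the involved constants are units and
which divides `2^k - 1`, one of the two relevant minors is a unit. -/
theorem ConcurrentLinesAux.key (v : HeightOneSpectrum (𝓞 F)) {m n k : ℕ}
    (hgcd : Nat.gcd m n = 1)
    {cb ad eb af : F} (hcb : v.valuation F cb = 1) (had : v.valuation F ad = 1)
    (heb : v.valuation F eb = 1) (haf : v.valuation F af = 1)
    (hk : v.valuation F ((2 : F) ^ k - 1) < 1) :
    v.valuation F (cb * ((2 : F) ^ m - 1) - ad * ((2 : F) ^ n - 1)) = 1 ∨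
    v.valuation F (eb * ((2 : F) ^ m - 1) - af * ((2 : F) ^ k - 1)) = 1 := by
  by_cases h1 : v.valuation F (cb * ((2 : F) ^ m - 1) - ad * ((2 : F) ^ n - 1)) = 1
  · exact Or.inl h1
  right
  have hM1le : v.valuation F (cb * ((2 : F) ^ m - 1) - ad * ((2 : F) ^ n - 1)) ≤ 1 := by
    refine le_trans ((v.valuation F).map_sub _ _) (max_le ?_ ?_) <;>
      rw [map_mul] <;> simp [hcb, had, ConcurrentLinesAux.val2pow_le v]
  have hM1lt := lt_of_le_of_ne hM1le h1
  have hm1 : v.valuation F ((2 : F) ^ m - 1) = 1 := by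
    by_contra hm'
    have hmlt := lt_of_le_of_ne (ConcurrentLinesAux.val2pow_le v m) hm'
    have hnlt : v.valuation F (ad * ((2 : F) ^ n - 1)) < 1 := by
      have heq : ad * ((2 : F) ^ n - 1) =
          cb * ((2 : F) ^ m - 1) - (cb * ((2 : F) ^ m - 1) - ad * ((2 : F) ^ n - 1)) := by ring
      rw [heq]
      refine lt_of_le_of_lt ((v.valuation F).map_sub _ _) (max_lt ?_ hM1lt)
      rw [map_mul, hcb, one_mul]; exact hmlt
    rw [map_mul, had, one_mul] at hnlt
    exact ConcurrentLinesAux.no_common_divisor hgcd v hmlt hnlt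
  have hAx : v.valuation F (eb * ((2 : F) ^ m - 1)) = 1 := by rw [map_mul, heb, one_mul, hm1]
  have hBx : v.valuation F (af * ((2 : F) ^ k - 1)) < 1 := by rw [map_mul, haf, one_mul]; exact hk
  have hne : v.valuation F (eb * ((2 : F) ^ m - 1)) ≠ v.valuation F (-(af * ((2 : F) ^ k - 1))) := by
    rw [Valuation.map_neg, hAx]
    exact fun hcon => absurd (hcon ▸ hBx) (lt_irrefl _)
  calc v.valuation F (eb * ((2 : F) ^ m - 1) - af * ((2 : F) ^ k - 1))
      = v.valuation F (eb * ((2 : F) ^ m - 1) + -(af * ((2 : F) ^ k - 1))) := by ring_nf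
    _ = max (v.valuation F (eb * ((2 : F) ^ m - 1)))
          (v.valuation F (-(af * ((2 : F) ^ k - 1)))) := (v.valuation F).map_add_of_distinct_val hne
    _ = 1 := by rw [Valuation.map_neg, hAx]; exact max_eq_left (le_of_lt (hAx ▸ hBx))

end AuxiliaryLemmas

section PolyLemmas

variable {F : Type*} [Field F]

theorem ConcurrentLinesAux.eval_aeval2 (p : MvPolynomial (Fin 3) F) (s t y : F) :
    Polynomial.eval y (MvPolynomial.aeval ![Polynomial.C s, Polynomial.C t, Polynomial.X] p)
      = MvPolynomial.eval ![s, t, y] p := by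
  induction p using MvPolynomial.induction_on with
  | C a => simp
  | add p q hp hq => simp [hp, hq]
  | mul_X p i hp => fin_cases i <;> simp [hp]

theorem ConcurrentLinesAux.eval_aeval1 (p : MvPolynomial (Fin 3) F) (s y x : F) :
    Polynomial.eval x (MvPolynomial.aeval ![Polynomial.X, Polynomial.C s, Polynomial.C y] p)
      = MvPolynomial.eval ![x, s, y] p := by
  induction p using MvPolynomial.induction_on with
  | C a => simp
  | add p q hp hq => simp [hp, hq]
  | mul_X p i hp => fin_cases i <;> simp [hp]

theorem ConcurrentLinesAux.eval_aeval0 (p : MvPolynomial (Fin 3) F) (x y s : F) :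
    Polynomial.eval s (MvPolynomial.aeval ![Polynomial.C x, Polynomial.X, Polynomial.C y] p)
      = MvPolynomial.eval ![x, s, y] p := by
  induction p using MvPolynomial.induction_on with
  | C a => simp
  | add p q hp hq => simp [hp, hq]
  | mul_X p i hp => fin_cases i <;> simp [hp]

theorem ConcurrentLinesAux.two_pow_injective [CharZero F] :
    Function.Injective (fun j : ℕ => (2 : F) ^ j) := by
  intro j j' hjj
  have h : ((2 ^ j : ℕ) : F) = ((2 ^ j' : ℕ) : F) := by push_cast; exact hjj
  exact Nat.pow_right_injective (le_refl 2) (Nat.cast_injective h)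

end PolyLemmas

/-- (Theorem 1.2 of the paper, in explicit coordinates.)  Given `r ≥ 1` and
nonzero `b, d, f, aᵢ, cᵢ, eᵢ ∈ K`, there exist a finite extension `L` of `K` and a finite set
`S` of finite places of `L` as in `ConcurrentLinesDensityWitness`: all the given constants are
`S`-units and the corresponding set `E` of `S`-integral points is Zariski dense in `𝔸³`. -/
theorem concurrent_lines_potential_density
    (K : Type*) [Field K] [NumberField K]
    (r : ℕ) (hr : 1 ≤ r) (b d f : K) (a c e : Fin r → K)
    (hb : b ≠ 0) (hd : d ≠ 0) (hf : f ≠ 0)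
    (ha : ∀ i, a i ≠ 0) (hc : ∀ i, c i ≠ 0) (he : ∀ i, e i ≠ 0) :
    Nonempty (ConcurrentLinesDensityWitness K r b d f a c e) := by
  classical
  -- Construct a `Type 0` model `L` of `K` itself.
  obtain ⟨α, hα⟩ := Field.exists_primitive_element ℚ K
  have hint : IsIntegral ℚ α := Algebra.IsIntegral.isIntegral α
  haveI : Fact (Irreducible (minpoly ℚ α)) := ⟨minpoly.irreducible hint⟩
  set L : Type := AdjoinRoot (minpoly ℚ α) with hL
  have e1 : L ≃ₐ[ℚ] IntermediateField.adjoin ℚ {α} :=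
    IntermediateField.adjoinRootEquivAdjoin ℚ hint
  have e2 : IntermediateField.adjoin ℚ {α} ≃ₐ[ℚ] K :=
    (IntermediateField.equivOfEq hα).trans IntermediateField.topEquiv
  have ψ : L ≃ₐ[ℚ] K := e1.trans e2
  haveI : CharZero L := charZero_of_injective_algebraMap (algebraMap ℚ L).injective
  haveI : FiniteDimensional ℚ L := LinearEquiv.finiteDimensional ψ.symm.toLinearEquiv
  haveI : NumberField L := ⟨⟩
  letI : Algebra K L := (ψ.symm.toAlgHom.toRingHom).toAlgebra
  haveI hfd : FiniteDimensional K L := by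
    apply Module.Finite.of_surjective (Algebra.linearMap K L)
    intro y
    exact ⟨ψ y, by simp [Algebra.linearMap, RingHom.algebraMap_toAlgebra]⟩
  -- the images of the constants in L
  have hφ : Function.Injective (algebraMap K L) := (algebraMap K L).injective
  have hbL : algebraMap K L b ≠ 0 := by rw [Ne, map_eq_zero]; exact hb
  have hdL : algebraMap K L d ≠ 0 := by rw [Ne, map_eq_zero]; exact hd
  have hfL : algebraMap K L f ≠ 0 := by rw [Ne, map_eq_zero]; exact hf
  have haL : ∀ i, algebraMap K L (a i) ≠ 0 := fun i => by rw [Ne, map_eq_zero]; exact ha i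
  have hcL : ∀ i, algebraMap K L (c i) ≠ 0 := fun i => by rw [Ne, map_eq_zero]; exact hc i
  have heL : ∀ i, algebraMap K L (e i) ≠ 0 := fun i => by rw [Ne, map_eq_zero]; exact he i
  -- the finite set of bad places
  set Ω : Set L :=
    insert 2 (insert (algebraMap K L b) (insert (algebraMap K L d)
      (insert (algebraMap K L f)
        ((Set.range (fun i => algebraMap K L (a i)) ∪
          Set.range (fun i => algebraMap K L (c i))) ∪
          Set.range (fun i => algebraMap K L (e i)))))) with hΩ
  have hΩfin : Ω.Finite := by
    refine Set.Finite.insert _ (Set.Finite.insert _ (Set.Finite.insert _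
      (Set.Finite.insert _ ?_)))
    exact ((Set.finite_range _).union (Set.finite_range _)).union (Set.finite_range _)
  have hΩne : ∀ x ∈ Ω, x ≠ 0 := by
    intro x hx
    simp only [hΩ, Set.mem_insert_iff, Set.mem_union, Set.mem_range] at hx
    rcases hx with rfl | rfl | rfl | rfl | (⟨i, rfl⟩ | ⟨i, rfl⟩) | ⟨i, rfl⟩
    · exact two_ne_zero
    · exact hbL
    · exact hdL
    · exact hfL
    · exact haL i
    · exact hcL i
    · exact heL i
  have hBadfin : (⋃ x ∈ Ω, {v : HeightOneSpectrum (𝓞 L) | v.valuation L x ≠ 1}).Finite :=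
    Set.Finite.biUnion hΩfin (fun x hx => ConcurrentLinesAux.finite_places x (hΩne x hx))
  set S : Finset (HeightOneSpectrum (𝓞 L)) := hBadfin.toFinset with hSdef
  have hS : ∀ v : HeightOneSpectrum (𝓞 L), v ∉ S → ∀ x ∈ Ω, v.valuation L x = 1 := by
    intro v hv x hx
    by_contra hne
    exact hv (hBadfin.mem_toFinset.mpr (Set.mem_biUnion hx hne))
  have hmem2 : (2 : L) ∈ Ω := by simp [hΩ]
  have hmemb : algebraMap K L b ∈ Ω := by simp [hΩ]
  have hmemd : algebraMap K L d ∈ Ω := by simp [hΩ]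
  have hmemf : algebraMap K L f ∈ Ω := by simp [hΩ]
  have hmema : ∀ i, algebraMap K L (a i) ∈ Ω := by
    intro i
    simp only [hΩ, Set.mem_insert_iff, Set.mem_union, Set.mem_range]
    exact Or.inr (Or.inr (Or.inr (Or.inr (Or.inl (Or.inl ⟨i, rfl⟩)))))
  have hmemc : ∀ i, algebraMap K L (c i) ∈ Ω := by
    intro i
    simp only [hΩ, Set.mem_insert_iff, Set.mem_union, Set.mem_range]
    exact Or.inr (Or.inr (Or.inr (Or.inr (Or.inl (Or.inr ⟨i, rfl⟩)))))
  have hmeme : ∀ i, algebraMap K L (e i) ∈ Ω := by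
    intro i
    simp only [hΩ, Set.mem_insert_iff, Set.mem_union, Set.mem_range]
    exact Or.inr (Or.inr (Or.inr (Or.inr (Or.inr ⟨i, rfl⟩))))
  refine ⟨⟨L, hfd, S, ?_, ?_, ?_, ?_, ?_, ?_, ?_⟩⟩
  · intro v hv; exact hS v hv _ hmemb
  · intro v hv; exact hS v hv _ hmemd
  · intro v hv; exact hS v hv _ hmemf
  · intro i v hv; exact hS v hv _ (hmema i)
  · intro i v hv; exact hS v hv _ (hmemc i)
  · intro i v hv; exact hS v hv _ (hmeme i)
  -- density
  intro p hp
  have keypoint : ∀ n m : ℕ, Nat.gcd m n = 1 →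
      (∀ i, algebraMap K L (c i) * algebraMap K L b * ((2 : L) ^ m - 1) -
        algebraMap K L (a i) * algebraMap K L d * ((2 : L) ^ n - 1) ≠ 0) →
      ∃ k0 : ℕ, 0 < k0 ∧ ∀ t : ℕ, 0 < t →
        MvPolynomial.eval
          ![algebraMap K L b * 2 ^ m, algebraMap K L d * 2 ^ n,
            algebraMap K L f * 2 ^ (k0 * t)] p = 0 := by
    intro n m hgcd hM1
    have hWfin : (⋃ i, {v : HeightOneSpectrum (𝓞 L) |
        v.valuation L (algebraMap K L (c i) * algebraMap K L b * ((2 : L) ^ m - 1) -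
          algebraMap K L (a i) * algebraMap K L d * ((2 : L) ^ n - 1)) ≠ 1}).Finite :=
      Set.finite_iUnion fun i => ConcurrentLinesAux.finite_places _ (hM1 i)
    refine ⟨∏ v ∈ hWfin.toFinset, ConcurrentLinesAux.ord2 v,
      Finset.prod_pos (fun v _ => ConcurrentLinesAux.ord2_pos v), ?_⟩
    intro t ht
    set k := (∏ v ∈ hWfin.toFinset, ConcurrentLinesAux.ord2 v) * t with hkdef
    apply hp
    · intro j v hv
      have h2 : v.valuation L (2 : L) = 1 := hS v hv 2 hmem2
      have hval : ∀ u : L, u ∈ Ω → ∀ jj : ℕ, v.valuation L (u * 2 ^ jj) = 1 := by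
        intro u hu jj
        rw [map_mul, map_pow, h2, one_pow, mul_one]
        exact hS v hv u hu
      fin_cases j
      · simpa using hval _ hmemb m
      · simpa using hval _ hmemd n
      · simpa using hval _ hmemf k
    · intro v hv i
      have h2 : v.valuation L (2 : L) = 1 := hS v hv 2 hmem2
      have hcb : v.valuation L (algebraMap K L (c i) * algebraMap K L b) = 1 := by
        rw [map_mul, hS v hv _ (hmemc i), hS v hv _ hmemb, mul_one]
      have had : v.valuation L (algebraMap K L (a i) * algebraMap K L d) = 1 := by
        rw [map_mul, hS v hv _ (hmema i), hS v hv _ hmemd, mul_one]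
      have heb : v.valuation L (algebraMap K L (e i) * algebraMap K L b) = 1 := by
        rw [map_mul, hS v hv _ (hmeme i), hS v hv _ hmemb, mul_one]
      have haf : v.valuation L (algebraMap K L (a i) * algebraMap K L f) = 1 := by
        rw [map_mul, hS v hv _ (hmema i), hS v hv _ hmemf, mul_one]
      simp only [Matrix.cons_val_zero, Matrix.cons_val_one, Matrix.head_cons,
        Matrix.cons_val_two, Matrix.tail_cons]
      by_cases h1 : v.valuation L (algebraMap K L (c i) * algebraMap K L b * ((2 : L) ^ m - 1) -
          algebraMap K L (a i) * algebraMap K L d * ((2 : L) ^ n - 1)) = 1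
      · left
        rw [show algebraMap K L (c i) * (algebraMap K L b * 2 ^ m - algebraMap K L b) -
            algebraMap K L (a i) * (algebraMap K L d * 2 ^ n - algebraMap K L d)
            = algebraMap K L (c i) * algebraMap K L b * ((2 : L) ^ m - 1) -
              algebraMap K L (a i) * algebraMap K L d * ((2 : L) ^ n - 1) by ring]
        exact h1
      · right; right
        have hvW : v ∈ hWfin.toFinset := by
          rw [Set.Finite.mem_toFinset]
          exact Set.mem_iUnion.mpr ⟨i, h1⟩
        have hk2 : v.valuation L ((2 : L) ^ k - 1) < 1 :=
          ConcurrentLinesAux.ord2_spec v h2 k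
            (Dvd.dvd.mul_right (Finset.dvd_prod_of_mem _ hvW) t)
        rcases ConcurrentLinesAux.key v hgcd hcb had heb haf hk2 with h | h
        · exact absurd h h1
        · rw [show algebraMap K L (e i) * (algebraMap K L b * 2 ^ m - algebraMap K L b) -
              algebraMap K L (a i) * (algebraMap K L f * 2 ^ k - algebraMap K L f)
              = algebraMap K L (e i) * algebraMap K L b * ((2 : L) ^ m - 1) -
                algebraMap K L (a i) * algebraMap K L f * ((2 : L) ^ k - 1) by ring]
          exact h
  -- Step 1: vanish on a whole vertical line
  have step1 : ∀ n m : ℕ, Nat.gcd m n = 1 →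
      (∀ i, algebraMap K L (c i) * algebraMap K L b * ((2 : L) ^ m - 1) -
        algebraMap K L (a i) * algebraMap K L d * ((2 : L) ^ n - 1) ≠ 0) →
      ∀ y : L, MvPolynomial.eval ![algebraMap K L b * 2 ^ m, algebraMap K L d * 2 ^ n, y] p
        = 0 := by
    intro n m hgcd hM1 y
    obtain ⟨k0, hk0, hvan⟩ := keypoint n m hgcd hM1
    have hq : MvPolynomial.aeval
        ![Polynomial.C (algebraMap K L b * 2 ^ m), Polynomial.C (algebraMap K L d * 2 ^ n),
          Polynomial.X] p = 0 := by
      apply Polynomial.eq_zero_of_infinite_isRoot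
      apply Set.infinite_of_injective_forall_mem
        (f := fun t : ℕ => algebraMap K L f * (2 : L) ^ (k0 * (t + 1)))
      · intro t t' htt
        simp only at htt
        have h1 := ConcurrentLinesAux.two_pow_injective (mul_left_cancel₀ hfL htt)
        have h2 := Nat.eq_of_mul_eq_mul_left hk0 h1
        omega
      · intro t
        simp only [Set.mem_setOf_eq, Polynomial.IsRoot, ConcurrentLinesAux.eval_aeval2]
        exact hvan (t + 1) t.succ_pos
    rw [← ConcurrentLinesAux.eval_aeval2, hq, Polynomial.eval_zero]
  -- Step 2: vanish on a whole plane
  have step2 : ∀ n : ℕ, 1 ≤ n → ∀ x0 y : L,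
      MvPolynomial.eval ![x0, algebraMap K L d * 2 ^ n, y] p = 0 := by
    intro n hn x0 y
    have hq : MvPolynomial.aeval
        ![Polynomial.X, Polynomial.C (algebraMap K L d * 2 ^ n), Polynomial.C y] p = 0 := by
      apply Polynomial.eq_zero_of_infinite_isRoot
      have hgood : ({m : ℕ | Nat.gcd m n = 1} \
          ⋃ i, {m : ℕ | algebraMap K L (c i) * algebraMap K L b * ((2 : L) ^ m - 1) -
            algebraMap K L (a i) * algebraMap K L d * ((2 : L) ^ n - 1) = 0}).Infinite := by
        apply Set.Infinite.diff
        · apply Set.infinite_of_injective_forall_mem (f := fun j : ℕ => j * n + 1)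
          · intro j j' hjj
            simp only at hjj
            have hj : j * n = j' * n := by omega
            exact Nat.eq_of_mul_eq_mul_right hn hj
          · intro j
            simp only [Set.mem_setOf_eq]
            rw [Nat.gcd_comm]
            have h1 : Nat.gcd n (1 + j * n) = Nat.gcd n 1 := Nat.gcd_add_mul_right_right n 1 j
            rw [Nat.add_comm 1 (j * n)] at h1
            rw [h1, Nat.gcd_one_right]
        · apply Set.finite_iUnion
          intro i
          apply Set.Subsingleton.finite
          intro m1 hm1 m2 hm2
          simp only [Set.mem_setOf_eq, sub_eq_zero] at hm1 hm2
          have h12 : algebraMap K L (c i) * algebraMap K L b * ((2 : L) ^ m1 - 1)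
              = algebraMap K L (c i) * algebraMap K L b * ((2 : L) ^ m2 - 1) := by
            rw [hm1, hm2]
          have hcbne : algebraMap K L (c i) * algebraMap K L b ≠ 0 :=
            mul_ne_zero (hcL i) hbL
          have h3 := mul_left_cancel₀ hcbne h12
          have h4 : (2 : L) ^ m1 = (2 : L) ^ m2 := by
            have := sub_left_injective h3
            linear_combination h3
          exact ConcurrentLinesAux.two_pow_injective h4
      have himg : ((fun m : ℕ => algebraMap K L b * (2 : L) ^ m) ''
          ({m : ℕ | Nat.gcd m n = 1} \
          ⋃ i, {m : ℕ | algebraMap K L (c i) * algebraMap K L b * ((2 : L) ^ m - 1) -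
            algebraMap K L (a i) * algebraMap K L d * ((2 : L) ^ n - 1) = 0})).Infinite := by
        apply Set.Infinite.image ?_ hgood
        intro m1 _ m2 _ hmm
        exact ConcurrentLinesAux.two_pow_injective (mul_left_cancel₀ hbL hmm)
      refine himg.mono ?_
      rintro x ⟨m, hm, rfl⟩
      obtain ⟨hmgcd, hmne⟩ := hm
      simp only [Set.mem_iUnion, Set.mem_setOf_eq, not_exists] at hmne
      simp only [Set.mem_setOf_eq, Polynomial.IsRoot, ConcurrentLinesAux.eval_aeval1]
      exact step1 n m hmgcd (fun i => hmne i) y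
    rw [← ConcurrentLinesAux.eval_aeval1, hq, Polynomial.eval_zero]
  -- Step 3: vanish everywhere
  have step3 : ∀ x0 x1 y : L, MvPolynomial.eval ![x0, x1, y] p = 0 := by
    intro x0 x1 y
    have hq : MvPolynomial.aeval
        ![Polynomial.C x0, Polynomial.X, Polynomial.C y] p = 0 := by
      apply Polynomial.eq_zero_of_infinite_isRoot
      apply Set.infinite_of_injective_forall_mem
        (f := fun n : ℕ => algebraMap K L d * (2 : L) ^ (n + 1))
      · intro n n' hnn
        simp only at hnn
        have h1 := ConcurrentLinesAux.two_pow_injective (mul_left_cancel₀ hdL hnn)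
        omega
      · intro n
        simp only [Set.mem_setOf_eq, Polynomial.IsRoot, ConcurrentLinesAux.eval_aeval0]
        exact step2 (n + 1) n.succ_pos x0 y
    rw [← ConcurrentLinesAux.eval_aeval0, hq, Polynomial.eval_zero]
  apply MvPolynomial.funext
  intro x
  rw [map_zero]
  have hx : x = ![x 0, x 1, x 2] := by
    funext j; fin_cases j <;> rfl
  rw [hx]
  exact step3 (x 0) (x 1) (x 2)
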